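/- arXiv:1511.09171 — 2 statements merged into one kernel-verified Lean document; each statement's English description precedes it below -/
import Mathlib

section
/- Let q > 1 and suppose u : [0,∞) → ℝ is positive, satisfies u(r) ≥ a r² + b for all r ≥ 0 with a, b > 0, and admits the representation u(r) = (r/2)∫₀^r t² u(t)^{-q} dt - (1/2)∫₀^r t³ u(t)^{-q} dt + (1/(6r))∫₀^r t⁴ u(t)^{-q} dt + (r²/6)∫_r^∞ t u(t)^{-q} dt + γr²/6 + 1 for all r > 0, where γ > 0. Then u(r)/r² → γ/6 as r → ∞. -/
open MeasureTheory Filter Set intervalIntegral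

private lemma sqrt_tendsto_atTop : Tendsto Real.sqrt atTop atTop := by
  have : Real.sqrt = fun x : ℝ => x ^ (1 / (2:ℝ)) := funext fun x => Real.sqrt_eq_rpow x
  rw [this]
  exact tendsto_rpow_atTop (by norm_num)

private lemma aux_tail (g : ℝ → ℝ) (hgint : IntegrableOn g (Set.Ioi 0)) :
    Tendsto (fun r => ∫ t in Set.Ioi r, g t) atTop (nhds 0) := by
  have h := intervalIntegral_tendsto_integral_Ioi 0 hgint tendsto_id
  have h2 : Tendsto (fun r : ℝ => (∫ t in Set.Ioi (0:ℝ), g t) - ∫ t in (0:ℝ)..r, g t)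
      atTop (nhds 0) := by
    simpa using (tendsto_const_nhds (x := ∫ t in Set.Ioi (0:ℝ), g t) (f := atTop)).sub h
  refine h2.congr' ?_
  filter_upwards [eventually_gt_atTop (0:ℝ)] with r hr
  have hsub1 : IntegrableOn g (Set.Ioc 0 r) := hgint.mono_set Set.Ioc_subset_Ioi_self
  have hsub2 : IntegrableOn g (Set.Ioi r) := hgint.mono_set (Set.Ioi_subset_Ioi hr.le)
  have hsplit : ∫ t in Set.Ioi (0:ℝ), g t
      = (∫ t in Set.Ioc 0 r, g t) + ∫ t in Set.Ioi r, g t := by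
    rw [← setIntegral_union (Set.Ioc_disjoint_Ioi le_rfl) measurableSet_Ioi hsub1 hsub2,
      Set.Ioc_union_Ioi_eq_Ioi hr.le]
  rw [intervalIntegral.integral_of_le hr.le]
  linarith

private lemma aux_pow (g : ℝ → ℝ) (hgcont : ContinuousOn g (Set.Ici 0))
    (hgint : IntegrableOn g (Set.Ioi 0))
    (hgpos : ∀ t ≥ (0:ℝ), 0 ≤ g t) (k : ℕ) (hk : 1 ≤ k) :
    Tendsto (fun r => (∫ t in (0:ℝ)..r, t ^ k * g t) / r ^ k) atTop (nhds 0) := by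
  set G := ∫ t in Set.Ioi (0:ℝ), g t with hG
  have hG0 : 0 ≤ G := setIntegral_nonneg measurableSet_Ioi fun t ht => hgpos t ht.le
  have hgae : 0 ≤ᵐ[volume.restrict (Set.Ioi (0:ℝ))] g :=
    (ae_restrict_iff' measurableSet_Ioi).2 (ae_of_all _ fun t ht => hgpos t ht.le)
  have hcont' : ContinuousOn (fun t : ℝ => t ^ k * g t) (Set.Ici 0) :=
    (continuous_pow k).continuousOn.mul hgcont
  have hbound : Tendsto (fun r : ℝ => G / Real.sqrt r + ∫ t in Set.Ioi (Real.sqrt r), g t)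
      atTop (nhds 0) := by
    have h1 : Tendsto (fun r : ℝ => G / Real.sqrt r) atTop (nhds 0) := by
      simpa [div_eq_mul_inv] using
        (tendsto_inv_atTop_zero.comp sqrt_tendsto_atTop).const_mul G
    have h2 : Tendsto (fun r : ℝ => ∫ t in Set.Ioi (Real.sqrt r), g t) atTop (nhds 0) :=
      (aux_tail g hgint).comp sqrt_tendsto_atTop
    simpa using h1.add h2
  refine tendsto_of_tendsto_of_tendsto_of_le_of_le' tendsto_const_nhds hbound ?_ ?_
  · filter_upwards [eventually_gt_atTop (0:ℝ)] with r hr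
    refine div_nonneg ?_ (pow_nonneg hr.le k)
    exact intervalIntegral.integral_nonneg hr.le fun t ht =>
      mul_nonneg (pow_nonneg ht.1 k) (hgpos t ht.1)
  · filter_upwards [eventually_ge_atTop (1:ℝ)] with r hr
    set s := Real.sqrt r with hs
    have hr0 : (0:ℝ) < r := lt_of_lt_of_le one_pos hr
    have hs0 : (0:ℝ) < s := Real.sqrt_pos.2 hr0
    have hssq : s ^ 2 = r := Real.sq_sqrt hr0.le
    have hs1 : (1:ℝ) ≤ s := by nlinarith
    have hsr : s ≤ r := by nlinarith
    have hrk : (0:ℝ) < r ^ k := pow_pos hr0 k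
    -- split the integral
    have hint1 : IntervalIntegrable (fun t : ℝ => t ^ k * g t) volume 0 s := by
      apply ContinuousOn.intervalIntegrable
      apply hcont'.mono
      rw [Set.uIcc_of_le hs0.le]
      exact fun x hx => hx.1
    have hint2 : IntervalIntegrable (fun t : ℝ => t ^ k * g t) volume s r := by
      apply ContinuousOn.intervalIntegrable
      apply hcont'.mono
      rw [Set.uIcc_of_le hsr]
      exact fun x hx => le_trans hs0.le hx.1
    have hsplit : (∫ t in (0:ℝ)..r, t ^ k * g t)
        = (∫ t in (0:ℝ)..s, t ^ k * g t) + ∫ t in s..r, t ^ k * g t :=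
      (intervalIntegral.integral_add_adjacent_intervals hint1 hint2).symm
    -- bound first piece
    have hgint1 : IntegrableOn g (Set.Ioc 0 s) := hgint.mono_set Set.Ioc_subset_Ioi_self
    have hb1 : (∫ t in (0:ℝ)..s, t ^ k * g t) ≤ s ^ k * G := by
      rw [intervalIntegral.integral_of_le hs0.le]
      calc (∫ t in Set.Ioc (0:ℝ) s, t ^ k * g t)
          ≤ ∫ t in Set.Ioc (0:ℝ) s, s ^ k * g t := by
            refine setIntegral_mono_on ?_ (hgint1.const_mul _) measurableSet_Ioc ?_
            · exact hint1.1
            · intro t ht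
              exact mul_le_mul_of_nonneg_right
                (pow_le_pow_left₀ ht.1.le ht.2 k) (hgpos t ht.1.le)
        _ = s ^ k * ∫ t in Set.Ioc (0:ℝ) s, g t := MeasureTheory.integral_const_mul _ _
        _ ≤ s ^ k * G := by
            refine mul_le_mul_of_nonneg_left ?_ (pow_nonneg hs0.le k)
            exact setIntegral_mono_set hgint hgae
              (HasSubset.Subset.eventuallyLE Set.Ioc_subset_Ioi_self)
    -- bound second piece
    have hgintIois : IntegrableOn g (Set.Ioi s) := hgint.mono_set (Set.Ioi_subset_Ioi hs0.le)
    have hgint2 : IntegrableOn g (Set.Ioc s r) := hgintIois.mono_set Set.Ioc_subset_Ioi_self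
    have hgae2 : 0 ≤ᵐ[volume.restrict (Set.Ioi s)] g :=
      (ae_restrict_iff' measurableSet_Ioi).2
        (ae_of_all _ fun t ht => hgpos t (le_trans hs0.le ht.le))
    have hb2 : (∫ t in s..r, t ^ k * g t) ≤ r ^ k * ∫ t in Set.Ioi s, g t := by
      rw [intervalIntegral.integral_of_le hsr]
      calc (∫ t in Set.Ioc s r, t ^ k * g t)
          ≤ ∫ t in Set.Ioc s r, r ^ k * g t := by
            refine setIntegral_mono_on ?_ (hgint2.const_mul _) measurableSet_Ioc ?_
            · exact hint2.1
            · intro t ht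
              exact mul_le_mul_of_nonneg_right
                (pow_le_pow_left₀ (le_trans hs0.le ht.1.le) ht.2 k)
                (hgpos t (le_trans hs0.le ht.1.le))
        _ = r ^ k * ∫ t in Set.Ioc s r, g t := MeasureTheory.integral_const_mul _ _
        _ ≤ r ^ k * ∫ t in Set.Ioi s, g t := by
            refine mul_le_mul_of_nonneg_left ?_ hrk.le
            exact setIntegral_mono_set hgintIois hgae2
              (HasSubset.Subset.eventuallyLE Set.Ioc_subset_Ioi_self)
    -- combine
    have hkey : s ^ k * G ≤ G / s * r ^ k := by
      rw [div_mul_eq_mul_div, le_div_iff₀ hs0]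
      calc s ^ k * G * s = G * s ^ (k + 1) := by ring
        _ ≤ G * s ^ (2 * k) :=
            mul_le_mul_of_nonneg_left (pow_le_pow_right₀ hs1 (by omega)) hG0
        _ = G * r ^ k := by rw [pow_mul, hssq]
    rw [hsplit, div_le_iff₀ hrk]
    calc (∫ t in (0:ℝ)..s, t ^ k * g t) + ∫ t in s..r, t ^ k * g t
        ≤ s ^ k * G + r ^ k * ∫ t in Set.Ioi s, g t := add_le_add hb1 hb2
      _ ≤ G / s * r ^ k + r ^ k * ∫ t in Set.Ioi s, g t := add_le_add hkey le_rfl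
      _ = (G / s + ∫ t in Set.Ioi s, g t) * r ^ k := by ring

set_option maxHeartbeats 1000000 in
theorem stmt_18 (q : ℝ) (hq : 1 < q) (u : ℝ → ℝ) (a b γ : ℝ)
    (ha : 0 < a) (hb : 0 < b) (hγ : 0 < γ)
    (hupos : ∀ r ≥ 0, 0 < u r)
    (hucont : ContinuousOn u (Set.Ici 0))
    (hubound : ∀ r ≥ 0, a * r ^ 2 + b ≤ u r)
    (hrep : ∀ r > 0, u r =
      (r / 2) * (∫ t in (0:ℝ)..r, t ^ 2 * u t ^ (-q))
      - (1 / 2) * (∫ t in (0:ℝ)..r, t ^ 3 * u t ^ (-q))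
      + (1 / (6 * r)) * (∫ t in (0:ℝ)..r, t ^ 4 * u t ^ (-q))
      + (r ^ 2 / 6) * (∫ t in Set.Ioi r, t * u t ^ (-q))
      + γ * r ^ 2 / 6 + 1) :
    Filter.Tendsto (fun r => u r / r ^ 2) Filter.atTop (nhds (γ / 6)) := by
  set g : ℝ → ℝ := fun t => t * u t ^ (-q) with hg
  have hgcont : ContinuousOn g (Set.Ici 0) := by
    rw [hg]
    exact ContinuousOn.mul continuousOn_id
      (hucont.rpow_const fun t ht => Or.inl (hupos t ht).ne')
  have hgpos : ∀ t ≥ (0:ℝ), 0 ≤ g t := fun t ht =>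
    mul_nonneg ht (Real.rpow_nonneg (hupos t ht).le _)
  have hgint : IntegrableOn g (Set.Ioi 0) := by
    rw [← Set.Ioc_union_Ioi_eq_Ioi (zero_le_one' ℝ)]
    refine IntegrableOn.union ?_ ?_
    · exact ((hgcont.mono (Set.Icc_subset_Ici_self)).integrableOn_Icc).mono_set
        Set.Ioc_subset_Icc_self
    · have hmaj : IntegrableOn (fun t : ℝ => a ^ (-q) * t ^ (1 - 2 * q)) (Set.Ioi 1) :=
        (integrableOn_Ioi_rpow_of_lt (by linarith) one_pos).const_mul _
      refine MeasureTheory.Integrable.mono hmaj ?_ ?_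
      · exact (hgcont.mono fun x (hx : x ∈ Set.Ioi (1:ℝ)) =>
          Set.mem_Ici.mpr (le_trans zero_le_one hx.le)).aestronglyMeasurable measurableSet_Ioi
      · rw [ae_restrict_iff' measurableSet_Ioi]
        refine ae_of_all _ fun t ht => ?_
        have ht0 : (0:ℝ) < t := lt_trans one_pos ht
        have hut : 0 < u t := hupos t ht0.le
        have hat2 : (0:ℝ) < a * t ^ 2 := by positivity
        have h1 : u t ^ (-q) ≤ (a * t ^ 2) ^ (-q) := by
          apply Real.rpow_le_rpow_of_nonpos hat2 ?_ (by linarith)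
          have := hubound t ht0.le
          linarith
        have h2 : (a * t ^ 2) ^ (-q) = a ^ (-q) * t ^ (-(2 * q)) := by
          rw [Real.mul_rpow ha.le (by positivity), ← Real.rpow_natCast t 2,
            ← Real.rpow_mul ht0.le]
          norm_num
        have h3 : g t ≤ a ^ (-q) * t ^ (1 - 2 * q) := by
          have : g t = t * u t ^ (-q) := rfl
          rw [this]
          calc t * u t ^ (-q) ≤ t * (a ^ (-q) * t ^ (-(2 * q))) := by
                rw [← h2]; exact mul_le_mul_of_nonneg_left h1 ht0.le
            _ = a ^ (-q) * (t ^ (1:ℝ) * t ^ (-(2 * q))) := by rw [Real.rpow_one]; ring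
            _ = a ^ (-q) * t ^ (1 - 2 * q) := by
                rw [← Real.rpow_add ht0]; ring_nf
        have hgnn : 0 ≤ g t := hgpos t ht0.le
        have hmnn : (0:ℝ) ≤ a ^ (-q) * t ^ (1 - 2 * q) := le_trans hgnn h3
        rw [Real.norm_eq_abs, Real.norm_eq_abs, abs_of_nonneg hgnn, abs_of_nonneg hmnn]
        exact h3
  have htail := aux_tail g hgint
  have hF1 := aux_pow g hgcont hgint hgpos 1 le_rfl
  have hF2 := aux_pow g hgcont hgint hgpos 2 one_le_two
  have hF3 := aux_pow g hgcont hgint hgpos 3 (by norm_num)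
  have hinv : Tendsto (fun r : ℝ => 1 / r ^ 2) atTop (nhds 0) := by
    have h : Tendsto (fun x : ℝ => x ^ 2) atTop atTop := tendsto_pow_atTop (by norm_num)
    simpa [one_div, Function.comp_def] using tendsto_inv_atTop_zero.comp h
  have hlim : Tendsto (fun r : ℝ =>
      (1/2) * ((∫ t in (0:ℝ)..r, t ^ 1 * g t) / r ^ 1)
      - (1/2) * ((∫ t in (0:ℝ)..r, t ^ 2 * g t) / r ^ 2)
      + (1/6) * ((∫ t in (0:ℝ)..r, t ^ 3 * g t) / r ^ 3)
      + (1/6) * (∫ t in Set.Ioi r, g t)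
      + γ / 6 + 1 / r ^ 2) atTop (nhds (γ / 6)) := by
    have := (((((hF1.const_mul (1/2:ℝ)).sub (hF2.const_mul (1/2:ℝ))).add
      (hF3.const_mul (1/6:ℝ))).add (htail.const_mul (1/6:ℝ))).add
      (tendsto_const_nhds (x := γ / 6))).add hinv
    simpa using this
  refine hlim.congr' ?_
  filter_upwards [eventually_gt_atTop (0:ℝ)] with r hr
  have e1 : (fun t : ℝ => t ^ 2 * u t ^ (-q)) = fun t => t ^ 1 * g t :=
    funext fun t => by simp only [hg]; ring
  have e2 : (fun t : ℝ => t ^ 3 * u t ^ (-q)) = fun t => t ^ 2 * g t :=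
    funext fun t => by simp only [hg]; ring
  have e3 : (fun t : ℝ => t ^ 4 * u t ^ (-q)) = fun t => t ^ 3 * g t :=
    funext fun t => by simp only [hg]; ring
  have hrep' := hrep r hr
  rw [show (∫ t in (0:ℝ)..r, t ^ 2 * u t ^ (-q)) = ∫ t in (0:ℝ)..r, t ^ 1 * g t by rw [e1],
    show (∫ t in (0:ℝ)..r, t ^ 3 * u t ^ (-q)) = ∫ t in (0:ℝ)..r, t ^ 2 * g t by rw [e2],
    show (∫ t in (0:ℝ)..r, t ^ 4 * u t ^ (-q)) = ∫ t in (0:ℝ)..r, t ^ 3 * g t by rw [e3]]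
    at hrep'
  rw [hrep']
  have hrne : r ≠ 0 := hr.ne'
  field_simp
end

section
/- Let q > 3/2 and suppose u : [0,∞) → ℝ is positive, satisfies u(r) ≥ a r² + b with a, b > 0, and u(r) - κr² = (r/2)∫₀^r t² u(t)^{-q} dt - (1/2)∫₀^r t³ u(t)^{-q} dt + (1/(6r))∫₀^r t⁴ u(t)^{-q} dt + (r²/6)∫_r^∞ t u(t)^{-q} dt + u(0) for all r > 0, where κ > 0. Then (u(r) - κr²)/r → (1/2)∫₀^∞ t² u(t)^{-q} dt as r → ∞. -/
open MeasureTheory Set Filter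

theorem stmt_19 (q : ℝ) (hq : 3 / 2 < q) (u : ℝ → ℝ) (a b κ : ℝ)
    (ha : 0 < a) (hb : 0 < b) (hκ : 0 < κ)
    (hupos : ∀ r ≥ 0, 0 < u r)
    (hucont : ContinuousOn u (Set.Ici 0))
    (hubound : ∀ r ≥ 0, a * r ^ 2 + b ≤ u r)
    (hrep : ∀ r > 0, u r - κ * r ^ 2 =
      (r / 2) * (∫ t in (0:ℝ)..r, t ^ 2 * u t ^ (-q))
      - (1 / 2) * (∫ t in (0:ℝ)..r, t ^ 3 * u t ^ (-q))
      + (1 / (6 * r)) * (∫ t in (0:ℝ)..r, t ^ 4 * u t ^ (-q))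
      + (r ^ 2 / 6) * (∫ t in Set.Ioi r, t * u t ^ (-q))
      + u 0) :
    Filter.Tendsto (fun r => (u r - κ * r ^ 2) / r)
      Filter.atTop (nhds ((1 / 2) * ∫ t in Set.Ioi (0:ℝ), t ^ 2 * u t ^ (-q))) := by
  have hq0 : (0:ℝ) < q := by linarith
  set g : ℝ → ℝ := fun t => t ^ 2 * u t ^ (-q) with hgdef
  -- continuity of t^k * u^(-q)
  have hcont : ∀ k : ℕ, ContinuousOn (fun t => t ^ k * u t ^ (-q)) (Ici (0:ℝ)) := by
    intro k
    exact (continuousOn_pow k).mul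
      (hucont.rpow_const (fun t ht => Or.inl (hupos t ht).ne'))
  have hnn : ∀ k : ℕ, ∀ t : ℝ, 0 ≤ t → 0 ≤ t ^ k * u t ^ (-q) := by
    intro k t ht
    exact mul_nonneg (pow_nonneg ht k) (Real.rpow_nonneg (hupos t ht).le _)
  have hmeasg : AEStronglyMeasurable g (volume.restrict (Ioi 0)) :=
    ((hcont 2).mono Ioi_subset_Ici_self).aestronglyMeasurable measurableSet_Ioi
  -- key bound : for t ≥ 1, g t ≤ a^(-q) * t ^ (2 - 2*q)
  have hbd : ∀ t : ℝ, 1 ≤ t → g t ≤ a ^ (-q) * t ^ (2 - 2*q) := by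
    intro t ht
    have ht0 : (0:ℝ) < t := by linarith
    have hat : (0:ℝ) < a * t ^ 2 := by positivity
    have h1 : u t ^ (-q) ≤ (a * t ^ 2) ^ (-q) := by
      apply Real.rpow_le_rpow_of_nonpos hat _ (by linarith)
      have := hubound t ht0.le
      nlinarith
    have h2 : (a * t ^ 2) ^ (-q) = a ^ (-q) * t ^ (-(2*q)) := by
      rw [Real.mul_rpow ha.le (by positivity)]
      congr 1
      rw [← Real.rpow_natCast t 2, ← Real.rpow_mul ht0.le]
      norm_num
    have h3 : t ^ (2:ℕ) * t ^ (-(2*q)) = t ^ (2 - 2*q) := by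
      rw [← Real.rpow_natCast t 2, ← Real.rpow_add ht0]
      norm_num
      ring_nf
    calc g t = t ^ 2 * u t ^ (-q) := rfl
      _ ≤ t ^ 2 * (a * t ^ 2) ^ (-q) := by
          apply mul_le_mul_of_nonneg_left h1 (by positivity)
      _ = a ^ (-q) * t ^ (2 - 2*q) := by rw [h2, ← h3]; ring
  -- integrability of g on Ioi 0
  have hint : IntegrableOn g (Ioi 0) := by
    have h1 : IntegrableOn g (Ioc 0 1) :=
      (ContinuousOn.integrableOn_Icc ((hcont 2).mono Icc_subset_Ici_self)).mono_set
        Ioc_subset_Icc_self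
    have h2 : IntegrableOn g (Ioi 1) := by
      have hmaj : IntegrableOn (fun t : ℝ => a ^ (-q) * t ^ (2 - 2*q)) (Ioi 1) :=
        (integrableOn_Ioi_rpow_of_lt (by linarith) one_pos).const_mul _
      apply hmaj.mono' (hmeasg.mono_measure
        (Measure.restrict_mono (Ioi_subset_Ioi one_pos.le) le_rfl))
      filter_upwards [ae_restrict_mem measurableSet_Ioi] with t ht
      rw [mem_Ioi] at ht
      rw [Real.norm_of_nonneg (hnn 2 t (by linarith))]
      exact hbd t ht.le
    have := h1.union h2
    rwa [Ioc_union_Ioi_eq_Ioi zero_le_one] at this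
  set I : ℝ := ∫ t in Ioi (0:ℝ), g t with hIdef
  -- term 1
  have T1 : Tendsto (fun r : ℝ => (1/2) * ∫ t in (0:ℝ)..r, g t) atTop (nhds ((1/2) * I)) :=
    (intervalIntegral_tendsto_integral_Ioi 0 hint tendsto_id).const_mul _
  -- generic vanishing lemma for interval-integral terms
  have gen : ∀ (k : ℕ) (c : ℝ → ℝ), Tendsto c atTop (nhds 0) →
      (∀ᶠ r in atTop, 0 ≤ c r ∧ ∀ t ∈ Ioc (0:ℝ) r, c r * t ^ k ≤ t ^ 2) →
      Tendsto (fun r : ℝ => c r * ∫ t in (0:ℝ)..r, t ^ k * u t ^ (-q)) atTop (nhds 0) := by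
    intro k c hc hcb
    have key : Tendsto (fun r : ℝ => ∫ t in Ioi (0:ℝ),
        (Ioc (0:ℝ) r).indicator (fun t => c r * (t ^ k * u t ^ (-q))) t)
        atTop (nhds (∫ t in Ioi (0:ℝ), (0:ℝ))) := by
      apply MeasureTheory.tendsto_integral_filter_of_dominated_convergence g
      · filter_upwards with r
        apply AEStronglyMeasurable.indicator _ measurableSet_Ioc
        exact (continuousOn_const.mul ((hcont k).mono Ioi_subset_Ici_self)).aestronglyMeasurable
          measurableSet_Ioi
      · filter_upwards [hcb] with r hr
        filter_upwards [ae_restrict_mem measurableSet_Ioi] with t ht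
        rw [mem_Ioi] at ht
        by_cases hmem : t ∈ Ioc (0:ℝ) r
        · rw [indicator_of_mem hmem]
          have h0 : (0:ℝ) ≤ u t ^ (-q) := Real.rpow_nonneg (hupos t ht.le).le _
          rw [Real.norm_of_nonneg (mul_nonneg hr.1 (hnn k t ht.le))]
          calc c r * (t ^ k * u t ^ (-q)) = (c r * t ^ k) * u t ^ (-q) := by ring
            _ ≤ t ^ 2 * u t ^ (-q) := mul_le_mul_of_nonneg_right (hr.2 t hmem) h0
        · rw [indicator_of_notMem hmem]
          simpa using hnn 2 t ht.le
      · exact hint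
      · filter_upwards [ae_restrict_mem measurableSet_Ioi] with t ht
        rw [mem_Ioi] at ht
        apply Tendsto.congr' (f₁ := fun r : ℝ => c r * (t ^ k * u t ^ (-q)))
        · filter_upwards [eventually_ge_atTop t] with r hr
          rw [indicator_of_mem (Set.mem_Ioc.mpr ⟨ht, hr⟩)]
        · simpa using hc.mul_const (t ^ k * u t ^ (-q))
    rw [MeasureTheory.integral_zero] at key
    apply key.congr'
    filter_upwards [eventually_gt_atTop (0:ℝ)] with r hr
    rw [MeasureTheory.integral_indicator measurableSet_Ioc,
      Measure.restrict_restrict measurableSet_Ioc,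
      inter_eq_left.2 Ioc_subset_Ioi_self,
      intervalIntegral.integral_of_le hr.le, ← MeasureTheory.integral_const_mul]
  have T2 : Tendsto (fun r : ℝ => (1/(2*r)) * ∫ t in (0:ℝ)..r, t ^ 3 * u t ^ (-q))
      atTop (nhds 0) := by
    apply gen 3
    · exact Tendsto.div_atTop tendsto_const_nhds (tendsto_id.const_mul_atTop two_pos)
    · filter_upwards [eventually_ge_atTop (1:ℝ)] with r hr
      constructor
      · positivity
      · intro t ⟨ht0, htr⟩
        rw [div_mul_eq_mul_div, div_le_iff₀ (by linarith)]
        nlinarith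
  have T3 : Tendsto (fun r : ℝ => (1/(6*r^2)) * ∫ t in (0:ℝ)..r, t ^ 4 * u t ^ (-q))
      atTop (nhds 0) := by
    apply gen 4
    · apply Tendsto.div_atTop tendsto_const_nhds
      exact (tendsto_pow_atTop two_ne_zero).const_mul_atTop (by norm_num)
    · filter_upwards [eventually_ge_atTop (1:ℝ)] with r hr
      constructor
      · positivity
      · intro t ⟨ht0, htr⟩
        rw [div_mul_eq_mul_div, div_le_iff₀ (by positivity)]
        have h2 : t^2 ≤ r^2 := by nlinarith
        nlinarith [mul_le_mul_of_nonneg_left h2 (sq_nonneg t)]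
  have T4 : Tendsto (fun r : ℝ => (r/6) * ∫ t in Ioi r, t * u t ^ (-q)) atTop (nhds 0) := by
    have key : Tendsto (fun r : ℝ => ∫ t in Ioi (0:ℝ),
        (Ioi r).indicator (fun t => (r/6) * (t * u t ^ (-q))) t)
        atTop (nhds (∫ t in Ioi (0:ℝ), (0:ℝ))) := by
      apply MeasureTheory.tendsto_integral_filter_of_dominated_convergence g
      · filter_upwards with r
        apply AEStronglyMeasurable.indicator _ measurableSet_Ioi
        exact (continuousOn_const.mul (continuousOn_id.mul
          ((hucont.rpow_const (fun t ht => Or.inl (hupos t ht).ne')).mono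
            Ioi_subset_Ici_self))).aestronglyMeasurable measurableSet_Ioi
      · filter_upwards [eventually_gt_atTop (0:ℝ)] with r hr
        filter_upwards [ae_restrict_mem measurableSet_Ioi] with t ht
        rw [mem_Ioi] at ht
        by_cases hmem : t ∈ Ioi r
        · rw [indicator_of_mem hmem]
          rw [mem_Ioi] at hmem
          have h0 : (0:ℝ) ≤ u t ^ (-q) := Real.rpow_nonneg (hupos t ht.le).le _
          rw [Real.norm_of_nonneg (by positivity)]
          calc r/6 * (t * u t ^ (-q)) = (r/6 * t) * u t ^ (-q) := by ring
            _ ≤ t ^ 2 * u t ^ (-q) := by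
                apply mul_le_mul_of_nonneg_right _ h0
                nlinarith
        · rw [indicator_of_notMem hmem]
          simpa using hnn 2 t ht.le
      · exact hint
      · filter_upwards [ae_restrict_mem measurableSet_Ioi] with t ht
        apply Tendsto.congr' (f₁ := fun _ : ℝ => (0:ℝ))
        · filter_upwards [eventually_ge_atTop t] with r hr
          rw [indicator_of_notMem (by simpa using hr)]
        · exact tendsto_const_nhds
    rw [MeasureTheory.integral_zero] at key
    apply key.congr'
    filter_upwards [eventually_gt_atTop (0:ℝ)] with r hr
    rw [MeasureTheory.integral_indicator measurableSet_Ioi,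
      Measure.restrict_restrict measurableSet_Ioi,
      inter_eq_left.2 (Ioi_subset_Ioi hr.le), ← MeasureTheory.integral_const_mul]
  have T5 : Tendsto (fun r : ℝ => u 0 / r) atTop (nhds 0) :=
    Tendsto.div_atTop tendsto_const_nhds tendsto_id
  have Tall := ((((T1.sub T2).add T3).add T4).add T5)
  rw [show (1/2) * I - 0 + 0 + 0 + 0 = (1/2) * I by ring] at Tall
  apply Tall.congr'
  filter_upwards [eventually_gt_atTop (0:ℝ)] with r hr
  rw [eq_div_iff hr.ne', hrep r hr]
  field_simp
end
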